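/- Let 0 ≤ s ≤ r ≤ T_k and let w ∈ ℝ^d be such that X has the affine property at ψ_{T−r}(u_k) + w. Assume (φ, ψ) satisfy the semiflow equations at u_k and exp(w·X_r) has finite Q'-expectation. Then, Q'-almost surely, E_{Q'}[exp(w·X_r) | ℱ_s] = exp( φ_{r−s}(ψ_{T−r}(u_k) + w) − φ_{r−s}(ψ_{T−r}(u_k)) + (ψ_{r−s}(ψ_{T−r}(u_k) + w) − ψ_{r−s}(ψ_{T−r}(u_k)))·X_s ). -/

import Mathlib

open MeasureTheory Real Matrix

/-- `X` has the affine property at `u` with exponent functions `φ, ψ`, with respect to the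
filtration `ℱ`, the measure `Q` and the horizon `T`. -/
def AffineProperty {Ω : Type*} {m0 : MeasurableSpace Ω} {d : ℕ} (T : ℝ)
    (ℱ : MeasureTheory.Filtration ℝ m0) (Q : Measure Ω) (X : ℝ → Ω → (Fin d → ℝ))
    (φ : ℝ → (Fin d → ℝ) → ℝ) (ψ : ℝ → (Fin d → ℝ) → (Fin d → ℝ))
    (u : Fin d → ℝ) : Prop :=
  ∀ s t : ℝ, 0 ≤ s → s ≤ t → t ≤ T →
    Integrable (fun ω => exp (u ⬝ᵥ X t ω)) Q ∧
    Q[fun ω => exp (u ⬝ᵥ X t ω)|ℱ s] =ᵐ[Q]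
      fun ω => exp (φ (t - s) u + ψ (t - s) u ⬝ᵥ X s ω)

/-- `(φ, ψ)` satisfy the semiflow equations at the vector `v`, up to horizon `T`. -/
def Semiflow {d : ℕ} (T : ℝ) (φ : ℝ → (Fin d → ℝ) → ℝ)
    (ψ : ℝ → (Fin d → ℝ) → (Fin d → ℝ)) (v : Fin d → ℝ) : Prop :=
  (∀ s t : ℝ, 0 ≤ s → 0 ≤ t → t + s ≤ T →
      φ (t + s) v = φ t v + φ s (ψ t v) ∧ ψ (t + s) v = ψ s (ψ t v)) ∧
    φ 0 v = 0 ∧ ψ 0 v = v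

/-- The forward measure `Q'` defined by the density
`dQ'/dQ = exp (φ (T - Tk) uk + ψ (T - Tk) uk ⬝ᵥ X Tk) / exp (φ T uk + ψ T uk ⬝ᵥ x)`. -/
noncomputable def forwardMeasure {Ω : Type*} {m0 : MeasurableSpace Ω} {d : ℕ} (T : ℝ)
    (Q : Measure Ω) (X : ℝ → Ω → (Fin d → ℝ)) (x : Fin d → ℝ)
    (φ : ℝ → (Fin d → ℝ) → ℝ) (ψ : ℝ → (Fin d → ℝ) → (Fin d → ℝ))
    (Tk : ℝ) (uk : Fin d → ℝ) : Measure Ω :=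
  Q.withDensity (fun ω => ENNReal.ofReal
    (exp (φ (T - Tk) uk + ψ (T - Tk) uk ⬝ᵥ X Tk ω) / exp (φ T uk + ψ T uk ⬝ᵥ x)))

lemma measurable_dotProduct_comp {Ω : Type*} {m' : MeasurableSpace Ω} {d : ℕ}
    (u : Fin d → ℝ) {f : Ω → Fin d → ℝ} (hf : Measurable[m'] f) :
    Measurable[m'] fun ω => u ⬝ᵥ f ω := by
  simp only [dotProduct]
  exact Finset.measurable_sum _ fun i _ => measurable_const.mul ((measurable_pi_apply i).comp hf)


/-- Under the forward measure `Q'`, for `0 ≤ s ≤ r ≤ Tk` and `w` such that `X` has the affine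
property at `ψ (T - r) uk + w`, one has `Q'`-a.s.
`E_{Q'}[exp (w ⬝ᵥ X r) | ℱ s]
  = exp (φ (r-s) (ψ (T-r) uk + w) - φ (r-s) (ψ (T-r) uk)
      + (ψ (r-s) (ψ (T-r) uk + w) - ψ (r-s) (ψ (T-r) uk)) ⬝ᵥ X s)`. -/
theorem forward_measure_mgf
    {Ω : Type*} {m0 : MeasurableSpace Ω} {d : ℕ} (T : ℝ) (hT : 0 < T)
    (ℱ : MeasureTheory.Filtration ℝ m0) (Q : Measure Ω) [IsProbabilityMeasure Q]
    (X : ℝ → Ω → (Fin d → ℝ)) (x : Fin d → ℝ)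
    (hadapted : ∀ t : ℝ, 0 ≤ t → t ≤ T → Measurable[ℱ t] (X t))
    (hX0 : ∀ ω, X 0 ω = x)
    (φ : ℝ → (Fin d → ℝ) → ℝ) (ψ : ℝ → (Fin d → ℝ) → (Fin d → ℝ))
    (Tk : ℝ) (hTk0 : 0 ≤ Tk) (hTkT : Tk ≤ T) (uk : Fin d → ℝ)
    (haffine_uk : AffineProperty T ℱ Q X φ ψ uk)
    (haffine_psi : AffineProperty T ℱ Q X φ ψ (ψ (T - Tk) uk))
    (s r : ℝ) (hs : 0 ≤ s) (hsr : s ≤ r) (hrTk : r ≤ Tk)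
    (w : Fin d → ℝ)
    (haffine_w : AffineProperty T ℱ Q X φ ψ (ψ (T - r) uk + w))
    (hsemiflow : Semiflow T φ ψ uk)
    (hint : Integrable (fun ω => exp (w ⬝ᵥ X r ω))
      (forwardMeasure T Q X x φ ψ Tk uk)) :
    (forwardMeasure T Q X x φ ψ Tk uk)[fun ω => exp (w ⬝ᵥ X r ω)|ℱ s]
      =ᵐ[forwardMeasure T Q X x φ ψ Tk uk]
    fun ω => exp (φ (r - s) (ψ (T - r) uk + w) - φ (r - s) (ψ (T - r) uk)
      + (ψ (r - s) (ψ (T - r) uk + w) - ψ (r - s) (ψ (T - r) uk)) ⬝ᵥ X s ω) := by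
    classical
  obtain ⟨hflow, hφ0, hψ0⟩ := hsemiflow
  have hm : (ℱ s : MeasurableSpace Ω) ≤ m0 := ℱ.le s
  have hr0 : 0 ≤ r := hs.trans hsr
  have hrT : r ≤ T := hrTk.trans hTkT
  have hsTk : s ≤ Tk := hsr.trans hrTk
  have hsT : s ≤ T := hsTk.trans hTkT
  -- semiflow identities
  have hψTr : ψ (Tk - r) (ψ (T - Tk) uk) = ψ (T - r) uk := by
    have h := (hflow (Tk - r) (T - Tk) (by linarith) (by linarith) (by linarith)).2
    rw [show T - Tk + (Tk - r) = T - r from by ring] at h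
    exact h.symm
  have hφTr : φ (T - r) uk = φ (T - Tk) uk + φ (Tk - r) (ψ (T - Tk) uk) := by
    have h := (hflow (Tk - r) (T - Tk) (by linarith) (by linarith) (by linarith)).1
    rw [show T - Tk + (Tk - r) = T - r from by ring] at h
    exact h
  have hψTs : ψ (Tk - s) (ψ (T - Tk) uk) = ψ (r - s) (ψ (T - r) uk) := by
    have h1 := (hflow (Tk - s) (T - Tk) (by linarith) (by linarith) (by linarith)).2
    rw [show T - Tk + (Tk - s) = T - s from by ring] at h1
    have h2 := (hflow (r - s) (T - r) (by linarith) (by linarith) (by linarith)).2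
    rw [show T - r + (r - s) = T - s from by ring] at h2
    rw [← h1, ← h2]
  have hφTs : φ (T - Tk) uk + φ (Tk - s) (ψ (T - Tk) uk)
      = φ (T - r) uk + φ (r - s) (ψ (T - r) uk) := by
    have h1 := (hflow (Tk - s) (T - Tk) (by linarith) (by linarith) (by linarith)).1
    rw [show T - Tk + (Tk - s) = T - s from by ring] at h1
    have h2 := (hflow (r - s) (T - r) (by linarith) (by linarith) (by linarith)).1
    rw [show T - r + (r - s) = T - s from by ring] at h2
    rw [← h1, ← h2]
  -- notation
  set v : Fin d → ℝ := ψ (T - r) uk + w with hv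
  set c : ℝ := φ T uk + ψ T uk ⬝ᵥ x with hc
  set Y : Ω → ℝ := fun ω => exp (w ⬝ᵥ X r ω) with hY
  set R : Ω → ℝ := fun ω => exp (φ (r - s) v - φ (r - s) (ψ (T - r) uk)
      + (ψ (r - s) v - ψ (r - s) (ψ (T - r) uk)) ⬝ᵥ X s ω) with hR
  set μ' := forwardMeasure T Q X x φ ψ Tk uk with hμ'
  set D : Ω → ℝ := fun ω => exp (φ (T - Tk) uk + ψ (T - Tk) uk ⬝ᵥ X Tk ω) / exp c with hD
  have hμ'eq : μ' = Q.withDensity fun ω => ENNReal.ofReal (D ω) := rfl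
  have hμ'NN : μ' = Q.withDensity fun ω => ((D ω).toNNReal : ENNReal) := rfl
  -- measurability
  have hXr_m : Measurable[ℱ r] (X r) := hadapted r hr0 hrT
  have hXs_m : Measurable[ℱ s] (X s) := hadapted s hs hsT
  have hXTk : Measurable (X Tk) := (hadapted Tk hTk0 hTkT).mono (ℱ.le Tk) le_rfl
  have hXr : Measurable (X r) := hXr_m.mono (ℱ.le r) le_rfl
  have hXs : Measurable (X s) := hXs_m.mono (ℱ.le s) le_rfl
  have hD_meas : Measurable D :=
    (Real.measurable_exp.comp (measurable_const.add
      (measurable_dotProduct_comp _ hXTk))).div_const _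
  have hD_pos : ∀ ω, 0 < D ω := fun ω => div_pos (exp_pos _) (exp_pos _)
  have hR_meas : Measurable[ℱ s] R :=
    Real.measurable_exp.comp (measurable_const.add
      (measurable_dotProduct_comp _ hXs_m))
  have hR_meas0 : Measurable R := hR_meas.mono hm le_rfl
  have hR_pos : ∀ ω, 0 < R ω := fun ω => exp_pos _
  -- h = exp of dot at Tk
  set h : Ω → ℝ := fun ω => exp (ψ (T - Tk) uk ⬝ᵥ X Tk ω) with hh
  have hh_int : Integrable h Q := (haffine_psi 0 Tk le_rfl hTk0 hTkT).1
  have hDh : ∀ ω, D ω = exp (φ (T - Tk) uk - c) * h ω := by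
    intro ω
    simp only [hD, hh, exp_add, exp_sub]
    ring
  have hD_int : Integrable D Q :=
    (hh_int.const_mul (exp (φ (T - Tk) uk - c))).congr
      (Filter.Eventually.of_forall fun ω => (hDh ω).symm)
  haveI : IsFiniteMeasure μ' := by
    rw [hμ'eq]; exact isFiniteMeasure_withDensity_ofReal hD_int.2
  haveI : SigmaFinite (μ'.trim hm) := inferInstance
  -- transfer integrability of Y
  have hintQ : Integrable (fun ω => Y ω * D ω) Q := by
    have hDnn : AEMeasurable (fun ω => (D ω).toNNReal) Q :=
      (measurable_real_toNNReal.comp hD_meas).aemeasurable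
    have h1 := hint
    rw [hμ'NN, integrable_withDensity_iff_integrable_smul₀ hDnn] at h1
    exact h1.congr (Filter.Eventually.of_forall fun ω => by
      simp [NNReal.smul_def, Real.coe_toNNReal _ (hD_pos ω).le, mul_comm])
  -- inner conditional expectation at time r
  have hcer := (haffine_psi r Tk hr0 hrTk hTkT).2
  set f_r : Ω → ℝ := fun ω => Y ω * exp (φ (T - Tk) uk - c) with hf_r
  have hfr_sm : StronglyMeasurable[ℱ r] f_r :=
    ((Real.measurable_exp.comp (measurable_dotProduct_comp _ hXr_m)).mul_const
      _).stronglyMeasurable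
  have hfrh : ∀ ω, f_r ω * h ω = Y ω * D ω := by
    intro ω; rw [hDh ω]; simp only [hf_r]; ring
  have hpull : Q[f_r * h|ℱ r] =ᵐ[Q] f_r * Q[h|ℱ r] :=
    condExp_mul_of_stronglyMeasurable_left hfr_sm
      (hintQ.congr (Filter.Eventually.of_forall fun ω => (hfrh ω).symm)) hh_int
  set g1 : Ω → ℝ := fun ω => exp (φ (T - r) uk - c) * exp (v ⬝ᵥ X r ω) with hg1
  have hinner : Q[fun ω => Y ω * D ω|ℱ r] =ᵐ[Q] g1 := by
    have e0 : Q[fun ω => Y ω * D ω|ℱ r] =ᵐ[Q] Q[f_r * h|ℱ r] :=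
      condExp_congr_ae (Filter.Eventually.of_forall fun ω => (hfrh ω).symm)
    refine e0.trans (hpull.trans ?_)
    have e1 : f_r * Q[h|ℱ r] =ᵐ[Q] fun ω => f_r ω *
        exp (φ (Tk - r) (ψ (T - Tk) uk) + ψ (Tk - r) (ψ (T - Tk) uk) ⬝ᵥ X r ω) := by
      filter_upwards [hcer] with ω hω
      simp only [Pi.mul_apply]
      exact congrArg (f_r ω * ·) hω
    refine e1.trans (Filter.Eventually.of_forall fun ω => ?_)
    simp only [hf_r, hg1, hY, hψTr, hφTr, hv, add_dotProduct, exp_add, exp_sub]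
    ring
  -- tower to time s
  have hcw := (haffine_w s r hs hsr hrT).2
  set Z : Ω → ℝ := fun ω => exp (φ (T - r) uk - c) *
      exp (φ (r - s) v + ψ (r - s) v ⬝ᵥ X s ω) with hZ
  have htower : Q[fun ω => Y ω * D ω|ℱ s] =ᵐ[Q] Z := by
    have t1 : Q[fun ω => Y ω * D ω|ℱ s]
        =ᵐ[Q] Q[Q[fun ω => Y ω * D ω|ℱ r]|ℱ s] :=
      (condExp_condExp_of_le (ℱ.mono hsr) (ℱ.le r)).symm
    refine t1.trans ((condExp_congr_ae hinner).trans ?_)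
    have t2 : Q[g1|ℱ s] =ᵐ[Q]
        exp (φ (T - r) uk - c) • Q[fun ω => exp (v ⬝ᵥ X r ω)|ℱ s] := by
      have : g1 = exp (φ (T - r) uk - c) • fun ω => exp (v ⬝ᵥ X r ω) := rfl
      rw [this]
      exact condExp_smul _ _ _
    refine t2.trans ?_
    filter_upwards [hcw] with ω hω
    simp only [Pi.smul_apply, hω, smul_eq_mul, hZ]
  have hZ_int : Integrable Z Q := integrable_condExp.congr htower
  have hZ_pos : ∀ ω, 0 < Z ω := fun ω => mul_pos (exp_pos _) (exp_pos _)
  -- conditional expectation of D at time s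
  have hce := (haffine_psi s Tk hs hsTk hTkT).2
  set eD : Ω → ℝ := fun ω => exp (φ (T - Tk) uk - c) *
      exp (φ (Tk - s) (ψ (T - Tk) uk) + ψ (Tk - s) (ψ (T - Tk) uk) ⬝ᵥ X s ω) with heD
  have heD_pos : ∀ ω, 0 < eD ω := fun ω => mul_pos (exp_pos _) (exp_pos _)
  have heD_meas : Measurable eD :=
    measurable_const.mul (Real.measurable_exp.comp (measurable_const.add
      (measurable_dotProduct_comp _ hXs)))
  have hcD : Q[D|ℱ s] =ᵐ[Q] eD := by
    have d0 : Q[D|ℱ s] =ᵐ[Q] Q[exp (φ (T - Tk) uk - c) • h|ℱ s] :=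
      condExp_congr_ae (Filter.Eventually.of_forall fun ω => hDh ω)
    refine d0.trans ((condExp_smul _ _ _).trans ?_)
    filter_upwards [hce] with ω hω
    simp only [Pi.smul_apply, hω, smul_eq_mul, heD]
    exact congrArg (rexp (φ (T - Tk) uk - c) * ·) hω
  have heD_int : Integrable eD Q := integrable_condExp.congr hcD
  have hReD : ∀ ω, R ω * eD ω = Z ω := by
    intro ω
    simp only [hR, heD, hZ, ← exp_add, sub_dotProduct]
    congr 1
    rw [hψTs]
    linarith [hφTs]
  -- the trimmed withDensity measures agree
  have hνeq : μ'.trim hm = (Q.withDensity fun ω => ENNReal.ofReal (eD ω)).trim hm := by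
    refine @Measure.ext Ω (ℱ s) _ _ (fun A hA => ?_)
    rw [trim_measurableSet_eq hm hA, trim_measurableSet_eq hm hA, hμ'eq,
      withDensity_apply _ (hm A hA), withDensity_apply _ (hm A hA),
      ← ofReal_integral_eq_lintegral_ofReal hD_int.integrableOn
        (Filter.Eventually.of_forall fun ω => (hD_pos ω).le),
      ← ofReal_integral_eq_lintegral_ofReal heD_int.integrableOn
        (Filter.Eventually.of_forall fun ω => (heD_pos ω).le)]
    congr 1
    rw [← setIntegral_condExp hm hD_int hA]
    exact integral_congr_ae (ae_restrict_of_ae hcD)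
  -- integrability of R with respect to μ'
  have hofR_m : Measurable[ℱ s] fun ω => ENNReal.ofReal (R ω) :=
    ENNReal.measurable_ofReal.comp hR_meas
  have hofR_m0 : Measurable fun ω => ENNReal.ofReal (R ω) :=
    ENNReal.measurable_ofReal.comp hR_meas0
  have hofeD_m0 : Measurable fun ω => ENNReal.ofReal (eD ω) :=
    ENNReal.measurable_ofReal.comp heD_meas
  have hRint' : Integrable R μ' := by
    constructor
    · exact hR_meas0.aestronglyMeasurable
    · rw [hasFiniteIntegral_iff_ofReal
        (Filter.Eventually.of_forall fun ω => (hR_pos ω).le)]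
      have step : ∫⁻ ω, ENNReal.ofReal (R ω) ∂μ'
          = ∫⁻ ω, ENNReal.ofReal (Z ω) ∂Q := by
        calc ∫⁻ ω, ENNReal.ofReal (R ω) ∂μ'
            = ∫⁻ ω, ENNReal.ofReal (R ω) ∂(μ'.trim hm) :=
              (lintegral_trim hm hofR_m).symm
          _ = ∫⁻ ω, ENNReal.ofReal (R ω)
                ∂((Q.withDensity fun ω => ENNReal.ofReal (eD ω)).trim hm) := by
              rw [hνeq]
          _ = ∫⁻ ω, ENNReal.ofReal (R ω)
                ∂(Q.withDensity fun ω => ENNReal.ofReal (eD ω)) :=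
              lintegral_trim hm hofR_m
          _ = ∫⁻ ω, ENNReal.ofReal (eD ω) * ENNReal.ofReal (R ω) ∂Q := by
              rw [lintegral_withDensity_eq_lintegral_mul Q hofeD_m0 hofR_m0]
              rfl
          _ = ∫⁻ ω, ENNReal.ofReal (Z ω) ∂Q := by
              refine lintegral_congr fun ω => ?_
              rw [← ENNReal.ofReal_mul (heD_pos ω).le, mul_comm, hReD ω]
      rw [step]
      have hZfin := hZ_int.2
      rwa [hasFiniteIntegral_iff_ofReal
        (Filter.Eventually.of_forall fun ω => (hZ_pos ω).le)] at hZfin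
  -- integrability of R * D under Q
  have hRD_int : Integrable (fun ω => R ω * D ω) Q := by
    have hDnn : AEMeasurable (fun ω => (D ω).toNNReal) Q :=
      (measurable_real_toNNReal.comp hD_meas).aemeasurable
    have h1 := hRint'
    rw [hμ'NN, integrable_withDensity_iff_integrable_smul₀ hDnn] at h1
    exact h1.congr (Filter.Eventually.of_forall fun ω => by
      simp [NNReal.smul_def, Real.coe_toNNReal _ (hD_pos ω).le, mul_comm])
  -- conditional expectation of R * D at time s
  have hRDs : Q[fun ω => R ω * D ω|ℱ s] =ᵐ[Q] Z := by
    have p1 : Q[R * D|ℱ s] =ᵐ[Q] R * Q[D|ℱ s] :=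
      condExp_mul_of_stronglyMeasurable_left hR_meas.stronglyMeasurable hRD_int hD_int
    refine p1.trans ?_
    filter_upwards [hcD] with ω hω
    simp only [Pi.mul_apply, hω]
    exact hReD ω
  -- set-integral equality
  have hwd : ∀ (g : Ω → ℝ) (A : Set Ω), MeasurableSet A →
      ∫ ω in A, g ω ∂μ' = ∫ ω in A, g ω * D ω ∂Q := by
    intro g A hA0
    have hDnn : AEMeasurable (fun ω => (D ω).toNNReal) (Q.restrict A) :=
      (measurable_real_toNNReal.comp hD_meas).aemeasurable
    rw [hμ'NN, setIntegral_withDensity_eq_setIntegral_smul₀ hDnn g hA0]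
    refine integral_congr_ae (Filter.Eventually.of_forall fun ω => ?_)
    simp [NNReal.smul_def, Real.coe_toNNReal _ (hD_pos ω).le, mul_comm]
  have heq : ∀ A : Set Ω, MeasurableSet[ℱ s] A → μ' A < ⊤ →
      ∫ ω in A, R ω ∂μ' = ∫ ω in A, Y ω ∂μ' := by
    intro A hA _
    rw [hwd R A (hm A hA), hwd Y A (hm A hA)]
    calc ∫ ω in A, R ω * D ω ∂Q
        = ∫ ω in A, (Q[fun ω => R ω * D ω|ℱ s]) ω ∂Q :=
          (setIntegral_condExp hm hRD_int hA).symm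
      _ = ∫ ω in A, Z ω ∂Q := integral_congr_ae (ae_restrict_of_ae hRDs)
      _ = ∫ ω in A, (Q[fun ω => Y ω * D ω|ℱ s]) ω ∂Q :=
          (integral_congr_ae (ae_restrict_of_ae htower)).symm
      _ = ∫ ω in A, Y ω * D ω ∂Q := setIntegral_condExp hm hintQ hA
  exact (ae_eq_condExp_of_forall_setIntegral_eq hm hint
    (fun A hA _ => hRint'.integrableOn) heq
    (hR_meas.stronglyMeasurable.aestronglyMeasurable)).symm
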